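/- For every convex f in F and ε > 0, the local modulus of continuity of the minimizer is sandwiched by the water-filling width: ρ_z(ε; f) ≤ ω_z(ε; f) ≤ 3 ρ_z(ε; f). -/

import Mathlib

open MeasureTheory Set

/-- L2 distance between two functions on [0,1]. -/
noncomputable def L2 (f g : ℝ → ℝ) : ℝ :=
  Real.sqrt (∫ t in (0:ℝ)..1, (f t - g t) ^ 2)

/-- Truncation f_u(t) = max{f(t), u}. -/
def trunc (f : ℝ → ℝ) (u : ℝ) : ℝ → ℝ := fun t => max (f t) u

/-- z is the unique minimizer of f on [0,1]. -/
def UniqueMinOn (f : ℝ → ℝ) (z : ℝ) : Prop :=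
  z ∈ Icc (0:ℝ) 1 ∧ ∀ t ∈ Icc (0:ℝ) 1, t ≠ z → f z < f t

/-- Water-filling depth ρ_m(ε; f), where Mf is the minimum of f. -/
noncomputable def rhoM (ε : ℝ) (f : ℝ → ℝ) (Mf : ℝ) : ℝ :=
  sSup {v | ∃ u, v = u - Mf ∧ L2 f (trunc f u) ≤ ε}

/-- Water-filling width ρ_z(ε; f), where Zf is the minimizer and Mf the minimum of f. -/
noncomputable def rhoZ (ε : ℝ) (f : ℝ → ℝ) (Zf Mf : ℝ) : ℝ :=
  sSup {v | ∃ t ∈ Icc (0:ℝ) 1, v = |t - Zf| ∧ f t ≤ rhoM ε f Mf + Mf}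

/-- Local modulus of continuity of the minimum. -/
noncomputable def omegaM (ε : ℝ) (f : ℝ → ℝ) (Mf : ℝ) : ℝ :=
  sSup {v | ∃ g zg, ConvexOn ℝ (Icc (0:ℝ) 1) g ∧ UniqueMinOn g zg ∧
    L2 f g ≤ ε ∧ v = |Mf - g zg|}

/-- Local modulus of continuity of the minimizer. -/
noncomputable def omegaZ (ε : ℝ) (f : ℝ → ℝ) (Zf : ℝ) : ℝ :=
  sSup {v | ∃ g zg, ConvexOn ℝ (Icc (0:ℝ) 1) g ∧ UniqueMinOn g zg ∧
    L2 f g ≤ ε ∧ v = |Zf - zg|}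

lemma convex_upper_bound {f : ℝ → ℝ} (hf : ConvexOn ℝ (Icc (0:ℝ) 1) f)
    {t : ℝ} (ht : t ∈ Icc (0:ℝ) 1) : f t ≤ max (f 0) (f 1) := by
  obtain ⟨ht0, ht1⟩ := ht
  have h := hf.2 (show (0:ℝ) ∈ Icc (0:ℝ) 1 by simp) (show (1:ℝ) ∈ Icc (0:ℝ) 1 by simp)
    (show (0:ℝ) ≤ 1 - t by linarith) (show (0:ℝ) ≤ t from ht0) (show (1 - t) + t = 1 by ring)
  simp only [smul_eq_mul, mul_zero, mul_one, zero_add] at h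
  have h2 : f t ≤ (1 - t) * f 0 + t * f 1 := by simpa using h
  calc f t ≤ (1 - t) * f 0 + t * f 1 := h2
    _ ≤ (1 - t) * max (f 0) (f 1) + t * max (f 0) (f 1) := by
        gcongr
        · exact le_max_left _ _
        · exact le_max_right _ _
    _ = max (f 0) (f 1) := by ring

lemma convex_midpoint {f : ℝ → ℝ} (hf : ConvexOn ℝ (Icc (0:ℝ) 1) f)
    {x y : ℝ} (hx : x ∈ Icc (0:ℝ) 1) (hy : y ∈ Icc (0:ℝ) 1) :
    f ((x + y)/2) ≤ (f x + f y)/2 := by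
  have h := hf.2 hx hy (show (0:ℝ) ≤ 1/2 by norm_num) (show (0:ℝ) ≤ 1/2 by norm_num)
    (show (1:ℝ)/2 + 1/2 = 1 by norm_num)
  simp only [smul_eq_mul] at h
  calc f ((x+y)/2) = f (1/2*x + 1/2*y) := by ring_nf
    _ ≤ 1/2 * f x + 1/2 * f y := h
    _ = (f x + f y)/2 := by ring

lemma strictMono_right {f : ℝ → ℝ} {z : ℝ} (hf : ConvexOn ℝ (Icc (0:ℝ) 1) f)
    (hz : UniqueMinOn f z) {s₁ s₂ : ℝ} (h1 : z ≤ s₁) (h12 : s₁ < s₂) (h2 : s₂ ≤ 1) :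
    f s₁ < f s₂ := by
  obtain ⟨⟨hz0, hz1⟩, hmin⟩ := hz
  have hs₂ : s₂ ∈ Icc (0:ℝ) 1 := ⟨by linarith, h2⟩
  rcases eq_or_lt_of_le h1 with rfl | h1'
  · exact hmin s₂ hs₂ (by linarith)
  · have hs₁ : s₁ ∈ Icc (0:ℝ) 1 := ⟨by linarith, by linarith⟩
    set l : ℝ := (s₁ - z)/(s₂ - z) with hl
    have hlpos : 0 < l := by apply div_pos <;> linarith
    have hllt : l < 1 := by rw [div_lt_one (by linarith)]; linarith
    have h := hf.2 (show z ∈ Icc (0:ℝ) 1 from ⟨hz0, hz1⟩) hs₂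
      (show (0:ℝ) ≤ 1 - l by linarith) (show (0:ℝ) ≤ l from hlpos.le) (show (1 - l) + l = 1 by ring)
    have hne : s₂ - z ≠ 0 := by intro h; rw [sub_eq_zero] at h; linarith
    have hcomb : (1 - l) • z + l • s₂ = s₁ := by
      rw [hl, smul_eq_mul, smul_eq_mul]; field_simp; ring
    rw [hcomb] at h
    simp only [smul_eq_mul] at h
    have hzlt : f z < f s₁ := hmin s₁ hs₁ (by linarith)
    nlinarith

lemma strictAnti_left {f : ℝ → ℝ} {z : ℝ} (hf : ConvexOn ℝ (Icc (0:ℝ) 1) f)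
    (hz : UniqueMinOn f z) {s₁ s₂ : ℝ} (h1 : 0 ≤ s₁) (h12 : s₁ < s₂) (h2 : s₂ ≤ z) :
    f s₂ < f s₁ := by
  obtain ⟨⟨hz0, hz1⟩, hmin⟩ := hz
  have hs₁ : s₁ ∈ Icc (0:ℝ) 1 := ⟨h1, by linarith⟩
  rcases eq_or_lt_of_le h2 with rfl | h2'
  · exact hmin s₁ hs₁ (by linarith)
  · have hs₂ : s₂ ∈ Icc (0:ℝ) 1 := ⟨by linarith, by linarith⟩
    set l : ℝ := (z - s₂)/(z - s₁) with hl
    have hlpos : 0 < l := by apply div_pos <;> linarith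
    have hllt : l < 1 := by rw [div_lt_one (by linarith)]; linarith
    have h := hf.2 (show z ∈ Icc (0:ℝ) 1 from ⟨hz0, hz1⟩) hs₁
      (show (0:ℝ) ≤ 1 - l by linarith) (show (0:ℝ) ≤ l from hlpos.le) (show (1 - l) + l = 1 by ring)
    have hne : z - s₁ ≠ 0 := by intro h; rw [sub_eq_zero] at h; linarith
    have hcomb : (1 - l) • z + l • s₁ = s₂ := by
      rw [hl, smul_eq_mul, smul_eq_mul]; field_simp; ring
    rw [hcomb] at h
    simp only [smul_eq_mul] at h
    have hzlt : f z < f s₂ := hmin s₂ hs₂ (by linarith)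
    nlinarith

lemma convex_continuousOn_Ioo {f : ℝ → ℝ} (hf : ConvexOn ℝ (Icc (0:ℝ) 1) f) :
    ContinuousOn f (Ioo (0:ℝ) 1) :=
  (hf.subset Ioo_subset_Icc_self (convex_Ioo 0 1)).continuousOn isOpen_Ioo

lemma abs_le_of_bounds {l x u : ℝ} (hl : l ≤ x) (hu : x ≤ u) : |x| ≤ |l| + |u| := by
  rw [abs_le]
  constructor
  · have := neg_abs_le l; have := abs_nonneg u; linarith
  · have := le_abs_self u; have := abs_nonneg l; linarith

lemma II_bdd {F : ℝ → ℝ} {α β C : ℝ} (hab : α ≤ β)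
    (hc : ContinuousOn F (Ioo α β)) (hb : ∀ t ∈ Ioo α β, |F t| ≤ C) :
    IntervalIntegrable F volume α β := by
  rw [intervalIntegrable_iff_integrableOn_Ioc_of_le hab,
    integrableOn_Ioc_iff_integrableOn_Ioo]
  refine ⟨hc.aestronglyMeasurable measurableSet_Ioo, ?_⟩
  apply MeasureTheory.HasFiniteIntegral.restrict_of_bounded (C := C) measure_Ioo_lt_top
  exact (ae_restrict_iff' measurableSet_Ioo).2 (Filter.Eventually.of_forall
      (fun t ht => by simpa using hb t ht))

lemma II_sq {H : ℝ → ℝ} {α β D : ℝ} (hab : α ≤ β)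
    (hc : ContinuousOn H (Ioo α β)) (hb : ∀ t ∈ Ioo α β, |H t| ≤ D) :
    IntervalIntegrable (fun t => (H t)^2) volume α β := by
  apply II_bdd hab (hc.pow 2) (C := D^2)
  intro t ht
  have h1 := hb t ht
  have h0 := abs_nonneg (H t)
  calc |(H t)^2| = H t ^ 2 := abs_of_nonneg (sq_nonneg _)
    _ = |H t|^2 := (sq_abs _).symm
    _ ≤ D^2 := by nlinarith

lemma integral_zero_on_Ioo {F : ℝ → ℝ} {α β : ℝ} (hab : α ≤ β)
    (h : ∀ t ∈ Ioo α β, F t = 0) : ∫ t in α..β, F t = 0 := by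
  rw [intervalIntegral.integral_of_le hab, MeasureTheory.integral_Ioc_eq_integral_Ioo,
    setIntegral_congr_fun measurableSet_Ioo (g := fun _ => (0:ℝ)) h]
  simp

lemma convex_exists_bound {f : ℝ → ℝ} (hf : ConvexOn ℝ (Icc (0:ℝ) 1) f) :
    ∃ C : ℝ, 0 ≤ C ∧ ∀ t ∈ Icc (0:ℝ) 1, |f t| ≤ C := by
  refine ⟨|2 * f (1/2) - max (f 0) (f 1)| + |max (f 0) (f 1)|,
    by positivity, fun t ht => ?_⟩
  have hub : f t ≤ max (f 0) (f 1) := convex_upper_bound hf ht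
  have hub' : f (1 - t) ≤ max (f 0) (f 1) :=
    convex_upper_bound hf ⟨by linarith [ht.2], by linarith [ht.1]⟩
  have hmid := convex_midpoint hf ht (show 1 - t ∈ Icc (0:ℝ) 1 by
    constructor <;> [linarith [ht.2]; linarith [ht.1]])
  have e : (t + (1 - t))/2 = 1/2 := by ring
  rw [e] at hmid
  have hlb : 2 * f (1/2) - max (f 0) (f 1) ≤ f t := by linarith
  exact abs_le_of_bounds hlb hub

lemma min_le {f : ℝ → ℝ} {z : ℝ} (hz : UniqueMinOn f z) :
    ∀ t ∈ Icc (0:ℝ) 1, f z ≤ f t := fun t ht => by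
  rcases eq_or_ne t z with rfl | h
  · exact le_rfl
  · exact (hz.2 t ht h).le

lemma L2_trunc_min {f : ℝ → ℝ} {z : ℝ} (hz : UniqueMinOn f z) :
    L2 f (trunc f (f z)) = 0 := by
  unfold L2 trunc
  rw [intervalIntegral.integral_congr (g := fun _ => (0:ℝ))]
  · simp
  · intro t ht
    rw [uIcc_of_le zero_le_one] at ht
    simp only [max_eq_left (min_le hz t ht)]
    simp

lemma L2_self (f : ℝ → ℝ) : L2 f f = 0 := by unfold L2; simp

lemma sq_of_L2_le {f g : ℝ → ℝ} {ε : ℝ} (hε : 0 ≤ ε) (h : L2 f g ≤ ε) :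
    ∫ t in (0:ℝ)..1, (f t - g t)^2 ≤ ε^2 := (Real.sqrt_le_left hε).1 h

lemma rhoM_set_zero_mem {f : ℝ → ℝ} {z ε : ℝ} (hz : UniqueMinOn f z) (hε : 0 ≤ ε) :
    (0:ℝ) ∈ {v | ∃ u, v = u - f z ∧ L2 f (trunc f u) ≤ ε} :=
  ⟨f z, by ring, by rw [L2_trunc_min hz]; exact hε⟩

lemma rhoM_set_bddAbove {f : ℝ → ℝ} {z ε : ℝ} (hf : ConvexOn ℝ (Icc (0:ℝ) 1) f)
    (hz : UniqueMinOn f z) (hε : 0 ≤ ε) :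
    BddAbove {v | ∃ u, v = u - f z ∧ L2 f (trunc f u) ≤ ε} := by
  obtain ⟨C, hC0, hC⟩ := convex_exists_bound hf
  set Bf := max (f 0) (f 1) with hBf
  refine ⟨Bf + ε - f z, fun v hv => ?_⟩
  obtain ⟨u, rfl, hu⟩ := hv
  have hkey : u ≤ Bf + ε := by
    by_contra hlt
    push_neg at hlt
    have hint : IntervalIntegrable (fun t => (f t - trunc f u t)^2) volume 0 1 := by
      apply II_sq zero_le_one (D := 2*C + |u|)
      · exact (convex_continuousOn_Ioo hf).sub
          ((convex_continuousOn_Ioo hf).sup continuousOn_const)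
      · intro t ht
        simp only [trunc]
        have h1 : |f t| ≤ C := hC t (Ioo_subset_Icc_self ht)
        have h2 : max (f t) u ≤ |f t| + |u| := by
          rcases max_cases (f t) u with ⟨h, _⟩ | ⟨h, _⟩ <;> rw [h]
          · have := abs_nonneg u; have := le_abs_self (f t); linarith
          · have := abs_nonneg (f t); have := le_abs_self u; linarith
        have h3 : f t ≤ max (f t) u := le_max_left _ _
        rw [abs_of_nonpos (by linarith)]
        have := neg_abs_le (f t)
        linarith
    have hmono : ∀ t ∈ Icc (0:ℝ) 1, (u - Bf)^2 ≤ (f t - trunc f u t)^2 := by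
      intro t ht
      have h1 : f t ≤ Bf := convex_upper_bound hf ht
      have h2 : trunc f u t = u := max_eq_right (by linarith)
      rw [h2]
      nlinarith
    have hconst : ∫ t in (0:ℝ)..1, (u - Bf)^2 = (u - Bf)^2 := by simp
    have hmono' := intervalIntegral.integral_mono_on zero_le_one
      (intervalIntegrable_const) hint hmono
    rw [hconst] at hmono'
    have hsq : Real.sqrt ((u - Bf)^2) ≤ Real.sqrt (∫ t in (0:ℝ)..1, (f t - trunc f u t)^2) :=
      Real.sqrt_le_sqrt hmono'
    rw [Real.sqrt_sq_eq_abs] at hsq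
    have : L2 f (trunc f u) = Real.sqrt (∫ t in (0:ℝ)..1, (f t - trunc f u t)^2) := rfl
    rw [← this] at hsq
    have := le_abs_self (u - Bf)
    linarith
  linarith

lemma omegaZ_set_bddAbove (f : ℝ → ℝ) (z ε : ℝ) (hz : UniqueMinOn f z) :
    BddAbove {v | ∃ g zg, ConvexOn ℝ (Icc (0:ℝ) 1) g ∧ UniqueMinOn g zg ∧
      L2 f g ≤ ε ∧ v = |z - zg|} := by
  refine ⟨1, fun v hv => ?_⟩
  obtain ⟨g, zg, _, hgm, _, rfl⟩ := hv
  have h1 := hgm.1.1; have h2 := hgm.1.2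
  have h3 := hz.1.1; have h4 := hz.1.2
  rw [abs_le]; constructor <;> linarith

lemma omegaZ_nonneg {f : ℝ → ℝ} {z ε : ℝ} (hf : ConvexOn ℝ (Icc (0:ℝ) 1) f)
    (hz : UniqueMinOn f z) (hε : 0 ≤ ε) : 0 ≤ omegaZ ε f z := by
  apply le_csSup (omegaZ_set_bddAbove f z ε hz)
  exact ⟨f, z, hf, hz, by rw [L2_self]; exact hε, by simp⟩

lemma partA {f : ℝ → ℝ} {z ε : ℝ} (hf : ConvexOn ℝ (Icc (0:ℝ) 1) f)
    (hz : UniqueMinOn f z) (hε : 0 < ε) : rhoZ ε f z (f z) ≤ omegaZ ε f z := by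
  obtain ⟨C, hC0, hC⟩ := convex_exists_bound hf
  have hz0 := hz.1.1
  have hz1 := hz.1.2
  have hbddΩ := omegaZ_set_bddAbove f z ε hz
  have hΩ0 : 0 ≤ omegaZ ε f z := omegaZ_nonneg hf hz hε.le
  rw [rhoZ]
  apply Real.sSup_le _ hΩ0
  rintro v ⟨t, ht, rfl, hft⟩
  apply le_of_forall_pos_le_add
  intro κ hκ
  rcases le_or_gt (|t - z|) κ with hsmall | hbig
  · linarith
  have htz : t ≠ z := by
    intro h; rw [h, sub_self, abs_zero] at hbig; linarith
  have hMlt : f z < f t := hz.2 t ht htz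
  have hm_bdd := rhoM_set_bddAbove hf hz hε.le
  have hm_ne : ({v | ∃ u, v = u - f z ∧ L2 f (trunc f u) ≤ ε}).Nonempty :=
    ⟨0, rhoM_set_zero_mem hz hε.le⟩
  have hm_pos : 0 < rhoM ε f (f z) := by
    have : f t - f z ≤ rhoM ε f (f z) := by linarith [hft]
    linarith
  set m := rhoM ε f (f z) with hmdef
  set η := min (m/2) (κ*m/2) with hηdef
  have hηpos : 0 < η := lt_min (by linarith) (by positivity)
  have hη1 : η ≤ m/2 := min_le_left _ _
  have hη2 : η ≤ κ*m/2 := min_le_right _ _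
  obtain ⟨w, hwmem, hwgt⟩ := exists_lt_of_lt_csSup hm_ne (show m - η < m by linarith)
  obtain ⟨u, rfl, hu⟩ := hwmem
  have huM : u - f z ≤ m := le_csSup hm_bdd ⟨u, rfl, hu⟩
  set θ := (u - η - f z)/m with hθdef
  have hθ0 : 0 ≤ θ := by
    apply div_nonneg _ hm_pos.le
    linarith
  have hθ1 : θ ≤ 1 := by
    rw [div_le_one hm_pos]
    linarith
  have hθm : θ * m = u - η - f z := by
    rw [hθdef]; field_simp
  have hθκ : 1 - θ ≤ κ := by
    have h3 : (1 - θ)*m ≤ κ * m := by nlinarith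
    exact le_of_mul_le_mul_right h3 hm_pos
  set t' := z + θ*(t - z) with ht'def
  have ht'mem : t' ∈ Icc (0:ℝ) 1 := by
    rcases le_total z t with hle | hle
    · have h1 : 0 ≤ θ*(t - z) := mul_nonneg hθ0 (by linarith)
      have h2 : θ*(t - z) ≤ t - z := by nlinarith
      exact ⟨by linarith, by linarith [ht.2]⟩
    · have h1 : θ*(t - z) ≤ 0 := mul_nonpos_of_nonneg_of_nonpos hθ0 (by linarith)
      have h2 : t - z ≤ θ*(t - z) := by nlinarith
      exact ⟨by linarith [ht.1], by linarith⟩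
  have hft' : f t' ≤ u - η := by
    have hcomb := hf.2 hz.1 ht (show (0:ℝ) ≤ 1 - θ by linarith) hθ0
      (show (1 - θ) + θ = 1 by ring)
    have he : (1 - θ) • z + θ • t = t' := by
      rw [smul_eq_mul, smul_eq_mul, ht'def]; ring
    rw [he, smul_eq_mul, smul_eq_mul] at hcomb
    have : (1 - θ) * f z + θ * f t ≤ (1 - θ) * f z + θ * (m + f z) := by nlinarith
    calc f t' ≤ (1 - θ) * f z + θ * f t := hcomb
      _ ≤ (1 - θ) * f z + θ * (m + f z) := this
      _ = f z + θ * m := by ring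
      _ = u - η := by rw [hθm]; ring
  set ψ := fun s => (u - η) + η * |s - t'| with hψdef
  set G := fun s => max (f s) (ψ s) with hGdef
  have hψu : ∀ s ∈ Icc (0:ℝ) 1, ψ s ≤ u := by
    intro s hs
    have h1 : |s - t'| ≤ 1 := by
      rw [abs_le]; constructor
      · linarith [hs.1, ht'mem.2]
      · linarith [hs.2, ht'mem.1]
    have : η * |s - t'| ≤ η := by nlinarith
    simp only [hψdef]; linarith
  have hψcont : ContinuousOn ψ (Ioo (0:ℝ) 1) := by
    apply continuousOn_const.add
    exact continuousOn_const.mul ((continuousOn_id.sub continuousOn_const).abs)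
  have hGconv : ConvexOn ℝ (Icc (0:ℝ) 1) G := by
    apply hf.sup
    have h1 : ConvexOn ℝ (Icc (0:ℝ) 1) (fun s => dist s t') := convexOn_dist t' (convex_Icc 0 1)
    have h2 := (convexOn_const (u - η) (convex_Icc (0:ℝ) 1)).add (h1.smul hηpos.le)
    have h3 : ψ = ((fun x => u - η) + fun x => η • dist x t') := by
      funext s; simp [hψdef, Real.dist_eq, smul_eq_mul]
    rw [h3]; exact h2
  have hGt' : G t' = u - η := by
    simp only [hGdef, hψdef, sub_self, abs_zero, mul_zero, add_zero]
    exact max_eq_right hft'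
  have hGmin : UniqueMinOn G t' := by
    refine ⟨ht'mem, fun s hs hne => ?_⟩
    have h2 : u - η < ψ s := by
      have : 0 < η * |s - t'| := mul_pos hηpos (abs_pos.2 (sub_ne_zero.2 hne))
      simp only [hψdef]; linarith
    have h3 : ψ s ≤ G s := le_max_right _ _
    rw [hGt']; linarith
  have hfleG : ∀ s, f s ≤ G s := fun s => le_max_left _ _
  have hGle : ∀ s ∈ Icc (0:ℝ) 1, G s ≤ max (f s) u := by
    intro s hs
    simp only [hGdef]
    exact max_le (le_max_left _ _) (le_trans (hψu s hs) (le_max_right _ _))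
  have hptwise : ∀ s ∈ Icc (0:ℝ) 1, (f s - G s)^2 ≤ (f s - trunc f u s)^2 := by
    intro s hs
    have h1 := hfleG s
    have h2 := hGle s hs
    simp only [trunc]
    have hA : 0 ≤ G s - f s := by linarith
    have hB : G s - f s ≤ max (f s) u - f s := by linarith
    calc (f s - G s)^2 = (G s - f s)^2 := by ring
      _ ≤ (max (f s) u - f s)^2 := pow_le_pow_left₀ hA hB 2
      _ = (f s - max (f s) u)^2 := by ring
  have hbndG : ∀ s ∈ Ioo (0:ℝ) 1, |f s - G s| ≤ 2*C + |u| := by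
    intro s hs
    have hsI := Ioo_subset_Icc_self hs
    have h1 := hfleG s
    have h2 := hGle s hsI
    have hfs := hC s hsI
    have h4 : max (f s) u ≤ |f s| + |u| := by
      rcases max_cases (f s) u with ⟨h, _⟩ | ⟨h, _⟩ <;> rw [h]
      · have := abs_nonneg u; have := le_abs_self (f s); linarith
      · have := abs_nonneg (f s); have := le_abs_self u; linarith
    rw [abs_of_nonpos (by linarith)]
    have := neg_abs_le (f s)
    linarith
  have hGcont : ContinuousOn G (Ioo (0:ℝ) 1) := (convex_continuousOn_Ioo hf).sup hψcont
  have hintG : IntervalIntegrable (fun s => (f s - G s)^2) volume 0 1 :=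
    II_sq zero_le_one ((convex_continuousOn_Ioo hf).sub hGcont) hbndG
  have hbndT : ∀ s ∈ Ioo (0:ℝ) 1, |f s - trunc f u s| ≤ 2*C + |u| := by
    intro s hs
    have hsI := Ioo_subset_Icc_self hs
    simp only [trunc]
    have hfs := hC s hsI
    have h3 : f s ≤ max (f s) u := le_max_left _ _
    have h4 : max (f s) u ≤ |f s| + |u| := by
      rcases max_cases (f s) u with ⟨h, _⟩ | ⟨h, _⟩ <;> rw [h]
      · have := abs_nonneg u; have := le_abs_self (f s); linarith
      · have := abs_nonneg (f s); have := le_abs_self u; linarith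
    rw [abs_of_nonpos (by linarith)]
    have := neg_abs_le (f s)
    linarith
  have hintT : IntervalIntegrable (fun s => (f s - trunc f u s)^2) volume 0 1 :=
    II_sq zero_le_one ((convex_continuousOn_Ioo hf).sub
      ((convex_continuousOn_Ioo hf).sup continuousOn_const)) hbndT
  have hmono := intervalIntegral.integral_mono_on zero_le_one hintG hintT hptwise
  have hL2G : L2 f G ≤ ε := by
    have h1 : ∫ s in (0:ℝ)..1, (f s - trunc f u s)^2 ≤ ε^2 := by
      have := sq_of_L2_le hε.le hu
      simpa using this
    apply (Real.sqrt_le_left hε.le).2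
    calc ∫ s in (0:ℝ)..1, (f s - G s)^2 ≤ ∫ s in (0:ℝ)..1, (f s - trunc f u s)^2 := hmono
      _ ≤ ε^2 := h1
  have hmem : |z - t'| ∈ {v | ∃ g zg, ConvexOn ℝ (Icc (0:ℝ) 1) g ∧ UniqueMinOn g zg ∧
      L2 f g ≤ ε ∧ v = |z - zg|} := ⟨G, t', hGconv, hGmin, hL2G, rfl⟩
  have hle : |z - t'| ≤ omegaZ ε f z := le_csSup hbddΩ hmem
  have heq : |z - t'| = θ * |t - z| := by
    have : z - t' = -(θ*(t - z)) := by rw [ht'def]; ring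
    rw [this, abs_neg, abs_mul, abs_of_nonneg hθ0]
  have habs1 : |t - z| ≤ 1 := by
    rw [abs_le]; constructor
    · linarith [ht.1]
    · linarith [ht.2, hz0]
  have hfin : |t - z| ≤ θ * |t - z| + κ := by
    have h1 : (1 - θ) * |t - z| ≤ (1 - θ) * 1 := mul_le_mul_of_nonneg_left habs1 (by linarith)
    linarith
  calc |t - z| ≤ θ*|t - z| + κ := hfin
    _ = |z - t'| + κ := by rw [heq]
    _ ≤ omegaZ ε f z + κ := by linarith

lemma sq_pos_of_ne {x : ℝ} (h : x ≠ 0) : 0 < x^2 := by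
  rcases h.lt_or_gt with h | h <;> nlinarith

set_option maxHeartbeats 1000000 in
lemma keyK {f g : ℝ → ℝ} {z zg a ρ ε : ℝ}
    (hf : ConvexOn ℝ (Icc (0:ℝ) 1) f) (hzf : UniqueMinOn f z)
    (hg : ConvexOn ℝ (Icc (0:ℝ) 1) g) (hzg : UniqueMinOn g zg)
    (hε : 0 < ε)
    (hma : f z < a)
    (hρ0 : 0 ≤ ρ)
    (hρ : ∀ t ∈ Icc (0:ℝ) 1, f t ≤ a → |t - z| ≤ ρ)
    (hφ : ε^2 ≤ ∫ t in (0:ℝ)..1, (max (a - f t) 0)^2)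
    (hL2 : ∫ t in (0:ℝ)..1, (f t - g t)^2 ≤ ε^2) :
    zg - z ≤ 3 * ρ := by
  by_contra hcon
  push_neg at hcon
  have h3z : z + 3*ρ < zg := by linarith
  obtain ⟨hz0, hz1⟩ := hzf.1
  obtain ⟨hzg0, hzg1⟩ := hzg.1
  obtain ⟨Cf, hCf0, hCf⟩ := convex_exists_bound hf
  obtain ⟨Cg, hCg0, hCg⟩ := convex_exists_bound hg
  -- the level set
  set S := {s : ℝ | s ∈ Icc (0:ℝ) 1 ∧ f s ≤ a} with hSdef
  have hzS : z ∈ S := ⟨hzf.1, hma.le⟩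
  have hSne : S.Nonempty := ⟨z, hzS⟩
  have hSbddA : BddAbove S := ⟨1, fun s hs => hs.1.2⟩
  have hSbddB : BddBelow S := ⟨0, fun s hs => hs.1.1⟩
  set p := sSup S with hpdef
  set q := sInf S with hqdef
  have hzp : z ≤ p := le_csSup hSbddA hzS
  have hqz : q ≤ z := csInf_le hSbddB hzS
  have hp_le : p ≤ z + ρ := by
    apply csSup_le hSne
    intro s hs
    have := hρ s hs.1 hs.2
    rw [abs_le] at this
    linarith [this.1, this.2]
  have hq_ge : z - ρ ≤ q := by
    apply le_csInf hSne
    intro s hs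
    have := hρ s hs.1 hs.2
    rw [abs_le] at this
    linarith [this.1, this.2]
  have hq0 : 0 ≤ q := le_csInf hSne (fun s hs => hs.1.1)
  have hp1 : p < 1 := by linarith
  have hpzg : p < zg := by linarith
  have hp0 : 0 ≤ p := le_trans hz0 hzp
  have hF1 : ∀ s, p < s → s ≤ 1 → a < f s := by
    intro s hps hs1
    by_contra hle
    push_neg at hle
    have : s ∈ S := ⟨⟨le_trans hp0 hps.le, hs1⟩, hle⟩
    exact absurd (le_csSup hSbddA this) (not_le.2 hps)
  have hF2 : ∀ s, 0 ≤ s → s < q → a < f s := by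
    intro s hs0 hsq
    by_contra hle
    push_neg at hle
    have : s ∈ S := ⟨⟨hs0, by linarith⟩, hle⟩
    exact absurd (csInf_le hSbddB this) (not_le.2 hsq)
  -- z < p
  have hzp' : z < p := by
    rcases eq_or_lt_of_le hzp with heq | hlt
    · exfalso
      rcases eq_or_lt_of_le hz0 with hz0' | hz0'
      · -- z = 0, p = 0 : the water integral is zero
        have hzero : ∀ t ∈ Ioo (0:ℝ) 1, (max (a - f t) 0)^2 = 0 := by
          intro t ht
          have : a < f t := hF1 t (by rw [← heq, ← hz0']; exact ht.1) ht.2.le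
          rw [max_eq_right (by linarith)]
          norm_num
        rw [integral_zero_on_Ioo zero_le_one hzero] at hφ
        nlinarith
      · -- 0 < z : f is continuous at z and f z < a, so points just right of z are in S
        have hcont : ContinuousAt f z :=
          (convex_continuousOn_Ioo hf).continuousAt
            (Ioo_mem_nhds hz0' (by linarith))
        have hev : f ⁻¹' (Iio a) ∈ nhds z := hcont.preimage_mem_nhds (Iio_mem_nhds hma)
        obtain ⟨δ, hδ0, hδ⟩ := Metric.mem_nhds_iff.1 hev
        set s := min (z + δ/2) ((z+1)/2) with hsdef
        have hs_gt : z < s := by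
          apply lt_min (by linarith) (by linarith)
        have hs_lt1 : s ≤ (z+1)/2 := min_le_right _ _
        have hs_ball : s ∈ Metric.ball z δ := by
          rw [Metric.mem_ball, Real.dist_eq, abs_of_pos (by linarith)]
          calc s - z ≤ (z + δ/2) - z := by linarith [min_le_left (z + δ/2) ((z+1)/2)]
            _ = δ/2 := by ring
            _ < δ := by linarith
        have hfs : f s < a := hδ hs_ball
        have hsS : s ∈ S := ⟨⟨by linarith, by linarith⟩, hfs.le⟩
        have h5 := le_csSup hSbddA hsS
        rw [← hpdef] at h5
        rw [heq] at hs_gt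
        linarith
    · exact hlt
  have hp_pos : 0 < p := lt_of_le_of_lt hz0 hzp'
  have hcontp : ContinuousAt f p :=
    (convex_continuousOn_Ioo hf).continuousAt (Ioo_mem_nhds hp_pos hp1)
  -- f p = a
  have hfp_le : f p ≤ a := by
    by_contra hgt
    push_neg at hgt
    have hev : f ⁻¹' (Ioi a) ∈ nhds p := hcontp.preimage_mem_nhds (Ioi_mem_nhds hgt)
    obtain ⟨δ, hδ0, hδ⟩ := Metric.mem_nhds_iff.1 hev
    obtain ⟨s, hsS, hs_gt⟩ := exists_lt_of_lt_csSup hSne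
      (show p - min δ (p - z) / 2 < p by
        have : 0 < min δ (p - z) := lt_min hδ0 (by linarith)
        linarith)
    have hs_le : s ≤ p := by
      have h5 := le_csSup hSbddA hsS; rwa [← hpdef] at h5
    have h1 : 0 < min δ (p - z) := lt_min hδ0 (by linarith)
    have hs_ball : s ∈ Metric.ball p δ := by
      rw [Metric.mem_ball, Real.dist_eq, abs_of_nonpos (by linarith)]
      have : min δ (p - z) ≤ δ := min_le_left _ _
      linarith
    have : a < f s := hδ hs_ball
    exact absurd hsS.2 (not_le.2 this)
  have hfp_ge : a ≤ f p := by
    by_contra hlt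
    push_neg at hlt
    have hev : f ⁻¹' (Iio a) ∈ nhds p := hcontp.preimage_mem_nhds (Iio_mem_nhds hlt)
    obtain ⟨δ, hδ0, hδ⟩ := Metric.mem_nhds_iff.1 hev
    set s := min (p + δ/2) ((p+1)/2) with hsdef
    have hs_gt : p < s := lt_min (by linarith) (by linarith)
    have hs_lt1 : s ≤ (p+1)/2 := min_le_right _ _
    have hs_ball : s ∈ Metric.ball p δ := by
      rw [Metric.mem_ball, Real.dist_eq, abs_of_pos (by linarith)]
      calc s - p ≤ (p + δ/2) - p := by linarith [min_le_left (p + δ/2) ((p+1)/2)]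
        _ = δ/2 := by ring
        _ < δ := by linarith
    have hfs : f s < a := hδ hs_ball
    have hsS : s ∈ S := ⟨⟨by linarith, by linarith⟩, hfs.le⟩
    have h5 := le_csSup hSbddA hsS
    rw [← hpdef] at h5
    linarith
  have hfp : f p = a := le_antisymm hfp_le hfp_ge
  -- membership helper for sub-intervals of [0,1]
  have msub : ∀ {c d : ℝ}, c ∈ Icc (0:ℝ) 1 → d ∈ Icc (0:ℝ) 1 → uIcc c d ⊆ uIcc (0:ℝ) 1 := by
    intro c d hc hd
    apply uIcc_subset_uIcc <;> rw [uIcc_of_le zero_le_one] <;> assumption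
  have habs_max : ∀ (x b : ℝ), |max (x - b) 0| ≤ |x| + |b| := by
    intro x b
    rw [abs_of_nonneg (le_max_right _ _)]
    apply max_le _ (by positivity)
    have h1 := le_abs_self x
    have h2 := neg_abs_le b
    linarith
  set Fm := fun t => max (a - f t) 0 with hFmdef
  set Gm := fun t => max (f t - a) 0 with hGmdef
  have hcf := convex_continuousOn_Ioo hf
  have hcg := convex_continuousOn_Ioo hg
  have hintF : IntervalIntegrable (fun t => (Fm t)^2) volume 0 1 := by
    apply II_sq zero_le_one (D := |a| + Cf)
    · exact (continuousOn_const.sub hcf).sup continuousOn_const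
    · intro t ht
      have := habs_max a (f t)
      have := hCf t (Ioo_subset_Icc_self ht)
      simp only [hFmdef]
      calc |max (a - f t) 0| ≤ |a| + |f t| := habs_max a (f t)
        _ ≤ |a| + Cf := by linarith
  have hintG : IntervalIntegrable (fun t => (Gm t)^2) volume 0 1 := by
    apply II_sq zero_le_one (D := Cf + |a|)
    · exact (hcf.sub continuousOn_const).sup continuousOn_const
    · intro t ht
      have := hCf t (Ioo_subset_Icc_self ht)
      simp only [hGmdef]
      calc |max (f t - a) 0| ≤ |f t| + |a| := habs_max (f t) a
        _ ≤ Cf + |a| := by linarith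
  have hintFG : IntervalIntegrable (fun t => (f t - g t)^2) volume 0 1 := by
    apply II_sq zero_le_one (D := Cf + Cg)
    · exact hcf.sub hcg
    · intro t ht
      have h1 := hCf t (Ioo_subset_Icc_self ht)
      have h2 := hCg t (Ioo_subset_Icc_self ht)
      have h3 := le_abs_self (f t)
      have h4 := neg_abs_le (f t)
      have h5 := le_abs_self (g t)
      have h6 := neg_abs_le (g t)
      rw [abs_le]; constructor <;> linarith
  -- the water mass is concentrated on [q, p]
  have hq1 : q ≤ 1 := le_trans hqz hz1
  have hqp : q ≤ p := le_trans hqz hzp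
  have hqmem : q ∈ Icc (0:ℝ) 1 := ⟨hq0, hq1⟩
  have hpmem : p ∈ Icc (0:ℝ) 1 := ⟨hp0, hp1.le⟩
  have hzgmem : zg ∈ Icc (0:ℝ) 1 := ⟨hzg0, hzg1⟩
  have h01 : (0:ℝ) ∈ Icc (0:ℝ) 1 := by norm_num
  have h11 : (1:ℝ) ∈ Icc (0:ℝ) 1 := by norm_num
  have hzero1 : ∫ t in (0:ℝ)..q, (Fm t)^2 = 0 := by
    apply integral_zero_on_Ioo hq0
    intro t ht
    have : a < f t := hF2 t ht.1.le ht.2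
    simp only [hFmdef]
    rw [max_eq_right (by linarith)]
    norm_num
  have hzero2 : ∫ t in p..1, (Fm t)^2 = 0 := by
    apply integral_zero_on_Ioo hp1.le
    intro t ht
    have : a < f t := hF1 t ht.1 ht.2.le
    simp only [hFmdef]
    rw [max_eq_right (by linarith)]
    norm_num
  have he1 := intervalIntegral.integral_add_adjacent_intervals
    (hintF.mono_set (msub h01 hqmem)) (hintF.mono_set (msub hqmem hpmem))
  have he2 := intervalIntegral.integral_add_adjacent_intervals
    (hintF.mono_set (msub h01 hpmem)) (hintF.mono_set (msub hpmem h11))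
  have hqpF : ε^2 ≤ ∫ t in q..p, (Fm t)^2 := by
    have : ∫ t in (0:ℝ)..1, (Fm t)^2 = ∫ t in q..p, (Fm t)^2 := by
      rw [← he2, ← he1, hzero1, hzero2]; ring
    rw [this] at hφ
    exact hφ
  -- reflection step
  have h2pq_le : 2*p - q ≤ z + 3*ρ := by linarith
  have h2pq_lt : 2*p - q < zg := by linarith
  have h2pq_ge : p ≤ 2*p - q := by linarith
  have h2pq_mem : 2*p - q ∈ Icc (0:ℝ) 1 := ⟨by linarith, by linarith⟩
  have hpt_refl : ∀ s ∈ Icc q p, (Fm s)^2 ≤ (Gm (2*p - s))^2 := by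
    intro s hs
    have hsmem : s ∈ Icc (0:ℝ) 1 := ⟨le_trans hq0 hs.1, le_trans hs.2 hp1.le⟩
    have hymem : 2*p - s ∈ Icc (0:ℝ) 1 := ⟨by linarith [hs.2], by linarith [hs.1]⟩
    have hmid := convex_midpoint hf hsmem hymem
    have he : (s + (2*p - s))/2 = p := by ring
    rw [he, hfp] at hmid
    simp only [hFmdef, hGmdef]
    apply pow_le_pow_left₀ (le_max_right _ _)
    apply max_le _ (le_max_right _ _)
    calc a - f s ≤ f (2*p - s) - a := by linarith
      _ ≤ max (f (2*p - s) - a) 0 := le_max_left _ _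
  have hint_comp : IntervalIntegrable (fun s => (Gm (2*p - s))^2) volume q p := by
    apply II_sq hqp (D := Cf + |a|)
    · have hmaps : MapsTo (fun s => 2*p - s) (Ioo q p) (Ioo (0:ℝ) 1) := by
        intro s hs
        exact ⟨show (0:ℝ) < 2*p - s by linarith [hs.2, hp_pos], show 2*p - s < 1 by linarith [hs.1]⟩
      have hc1 : ContinuousOn (fun s => f (2*p - s)) (Ioo q p) :=
        hcf.comp ((continuous_const.sub continuous_id).continuousOn) hmaps
      exact (hc1.sub continuousOn_const).sup continuousOn_const
    · intro s hs
      have hymem : 2*p - s ∈ Icc (0:ℝ) 1 :=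
        ⟨by linarith [hs.2], by linarith [hs.1]⟩
      have := hCf (2*p - s) hymem
      simp only [hGmdef]
      calc |max (f (2*p - s) - a) 0| ≤ |f (2*p - s)| + |a| := habs_max _ _
        _ ≤ Cf + |a| := by linarith
  have hrefl : ∫ s in q..p, (Fm s)^2 ≤ ∫ s in q..p, (Gm (2*p - s))^2 :=
    intervalIntegral.integral_mono_on hqp (hintF.mono_set (msub hqmem hpmem))
      hint_comp hpt_refl
  have hchange : ∫ s in q..p, (Gm (2*p - s))^2 = ∫ s in p..(2*p - q), (Gm s)^2 := by
    have := intervalIntegral.integral_comp_sub_left (a := q) (b := p)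
      (fun s => (Gm s)^2) (2*p)
    rw [show 2*p - p = p by ring] at this
    exact this
  have hsplitG := intervalIntegral.integral_add_adjacent_intervals
    (hintG.mono_set (msub hpmem h2pq_mem)) (hintG.mono_set (msub h2pq_mem hzgmem))
  have hGnn : 0 ≤ ∫ s in (2*p - q)..zg, (Gm s)^2 :=
    intervalIntegral.integral_nonneg h2pq_lt.le (fun s _ => sq_nonneg _)
  have hkey1 : ε^2 ≤ ∫ s in p..zg, (Gm s)^2 := by
    calc ε^2 ≤ ∫ t in q..p, (Fm t)^2 := hqpF
      _ ≤ ∫ s in q..p, (Gm (2*p - s))^2 := hrefl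
      _ = ∫ s in p..(2*p - q), (Gm s)^2 := hchange
      _ ≤ ∫ s in p..zg, (Gm s)^2 := by rw [← hsplitG]; linarith
  -- monotonicity facts for g around p
  have hg_ge : ∀ s, 0 ≤ s → s ≤ p → g p ≤ g s := by
    intro s hs0 hsp
    rcases eq_or_lt_of_le hsp with rfl | hlt
    · exact le_rfl
    · exact (strictAnti_left hg hzg hs0 hlt hpzg.le).le
  have hg_le : ∀ s, p ≤ s → s ≤ zg → g s ≤ g p := by
    intro s hps hszg
    rcases eq_or_lt_of_le hps with rfl | hlt
    · exact le_rfl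
    · exact (strictAnti_left hg hzg hp0 hlt hszg).le
  -- total integral splits
  have hs1 := intervalIntegral.integral_add_adjacent_intervals
    (hintFG.mono_set (msub h01 hqmem)) (hintFG.mono_set (msub hqmem hpmem))
  have hs2 := intervalIntegral.integral_add_adjacent_intervals
    (hintFG.mono_set (msub h01 hpmem)) (hintFG.mono_set (msub hpmem hzgmem))
  have hs3 := intervalIntegral.integral_add_adjacent_intervals
    (hintFG.mono_set (msub h01 hzgmem)) (hintFG.mono_set (msub hzgmem h11))
  have hnn1 : 0 ≤ ∫ s in (0:ℝ)..q, (f s - g s)^2 :=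
    intervalIntegral.integral_nonneg hq0 (fun s _ => sq_nonneg _)
  have hnn2 : 0 ≤ ∫ s in (0:ℝ)..p, (f s - g s)^2 :=
    intervalIntegral.integral_nonneg hp0 (fun s _ => sq_nonneg _)
  have hnn3 : 0 ≤ ∫ s in zg..1, (f s - g s)^2 :=
    intervalIntegral.integral_nonneg hzg1 (fun s _ => sq_nonneg _)
  rcases lt_or_ge (g p) a with hc | hc
  · -- case c < a : big gain on the right of p
    have hptw : ∀ s ∈ Icc p zg, (Gm s)^2 + (a - g p)^2 ≤ (f s - g s)^2 := by
      intro s hs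
      have hfs : a ≤ f s := by
        rcases eq_or_lt_of_le hs.1 with rfl | hlt
        · exact hfp_ge
        · exact (hF1 s hlt (le_trans hs.2 hzg1)).le
      have hgs : g s ≤ g p := hg_le s hs.1 hs.2
      have hGs : Gm s = f s - a := by
        simp only [hGmdef]; exact max_eq_left (by linarith)
      rw [hGs]
      have h1 : (f s - a) + (a - g p) ≤ f s - g s := by linarith
      have h2 : (0:ℝ) ≤ f s - a := by linarith
      have h3 : (0:ℝ) ≤ a - g p := by linarith
      have h4 : ((f s - a) + (a - g p))^2 ≤ (f s - g s)^2 :=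
        pow_le_pow_left₀ (by linarith) h1 2
      have h6 : ((f s - a) + (a - g p))^2
          = (f s - a)^2 + 2*((f s - a)*(a - g p)) + (a - g p)^2 := by ring
      linarith [mul_nonneg h2 h3]
    have hintSum : IntervalIntegrable (fun s => (Gm s)^2 + (a - g p)^2) volume p zg :=
      (hintG.mono_set (msub hpmem hzgmem)).add intervalIntegrable_const
    have hmono2 := intervalIntegral.integral_mono_on hpzg.le hintSum
      (hintFG.mono_set (msub hpmem hzgmem)) hptw
    have hadd : ∫ s in p..zg, ((Gm s)^2 + (a - g p)^2)
        = (∫ s in p..zg, (Gm s)^2) + (a - g p)^2 * (zg - p) := by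
      rw [intervalIntegral.integral_add (hintG.mono_set (msub hpmem hzgmem))
        intervalIntegrable_const, intervalIntegral.integral_const]
      rw [smul_eq_mul]
      ring
    have hposgain : 0 < (a - g p)^2 * (zg - p) := by
      exact mul_pos (sq_pos_of_ne (show a - g p ≠ 0 from (show (0:ℝ) < a - g p by linarith).ne'))
        (by linarith)
    have hfinal : ε^2 + (a - g p)^2 * (zg - p) ≤ ε^2 := by
      calc ε^2 + (a - g p)^2 * (zg - p)
          ≤ (∫ s in p..zg, (Gm s)^2) + (a - g p)^2 * (zg - p) := by linarith
        _ = ∫ s in p..zg, ((Gm s)^2 + (a - g p)^2) := hadd.symm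
        _ ≤ ∫ s in p..zg, (f s - g s)^2 := hmono2
        _ ≤ ∫ s in (0:ℝ)..1, (f s - g s)^2 := by rw [← hs3, ← hs2]; linarith
        _ ≤ ε^2 := hL2
    linarith
  · -- case c ≥ a : the water mass is dominated on the left, with strict gain on [p,zg]
    have hptw2 : ∀ s ∈ Icc q p, (Fm s)^2 ≤ (f s - g s)^2 := by
      intro s hs
      have hgs : g p ≤ g s := hg_ge s (le_trans hq0 hs.1) hs.2
      rcases lt_or_ge (f s) a with hfa | hfa
      · have hFs : Fm s = a - f s := by
          simp only [hFmdef]; exact max_eq_left (by linarith)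
        rw [hFs]
        have h1 : a - f s ≤ g s - f s := by linarith
        calc (a - f s)^2 ≤ (g s - f s)^2 := pow_le_pow_left₀ (by linarith) h1 2
          _ = (f s - g s)^2 := by ring
      · have hFs : Fm s = 0 := by
          simp only [hFmdef]; exact max_eq_right (by linarith)
        rw [hFs]
        simpa using sq_nonneg (f s - g s)
    have hmono3 := intervalIntegral.integral_mono_on hqp
      (hintF.mono_set (msub hqmem hpmem)) (hintFG.mono_set (msub hqmem hpmem)) hptw2
    -- strict positivity of ∫_p^zg (f-g)^2
    set mid := (p + zg)/2 with hmiddef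
    have hmid1 : p < mid := by rw [hmiddef]; linarith
    have hmid2 : mid < zg := by rw [hmiddef]; linarith
    have hsplit4 := intervalIntegral.integral_add_adjacent_intervals
      (hintFG.mono_set (msub hpmem ⟨by linarith, by linarith⟩))
      (hintFG.mono_set (msub ⟨(by linarith : (0:ℝ) ≤ mid), (by linarith : mid ≤ 1)⟩ hzgmem))
    have hpos : 0 < ∫ s in p..zg, (f s - g s)^2 := by
      rcases le_or_gt (f mid - g mid) 0 with hle | hgt
      · have hpos1 : 0 < ∫ s in p..mid, (f s - g s)^2 := by
          apply intervalIntegral.intervalIntegral_pos_of_pos_on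
            (hintFG.mono_set (msub hpmem ⟨by linarith, by linarith⟩)) _ hmid1
          intro s hs
          have hf1 : f s < f mid := strictMono_right hf hzf (by linarith [hs.1]) hs.2 (by linarith)
          have hg1 : g mid < g s := strictAnti_left hg hzg (by linarith [hs.1]) hs.2 (by linarith)
          exact sq_pos_of_ne (show f s - g s ≠ 0 from (show f s - g s < 0 by linarith).ne)
        have hnn4 : 0 ≤ ∫ s in mid..zg, (f s - g s)^2 :=
          intervalIntegral.integral_nonneg hmid2.le (fun s _ => sq_nonneg _)
        linarith [hsplit4]
      · have hpos1 : 0 < ∫ s in mid..zg, (f s - g s)^2 := by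
          apply intervalIntegral.intervalIntegral_pos_of_pos_on
            (hintFG.mono_set (msub ⟨(by linarith : (0:ℝ) ≤ mid), (by linarith : mid ≤ 1)⟩ hzgmem)) _ hmid2
          intro s hs
          have hf1 : f mid < f s := strictMono_right hf hzf (by linarith) hs.1 (by linarith [hs.2])
          have hg1 : g s < g mid := strictAnti_left hg hzg (by linarith) hs.1 (by linarith [hs.2])
          exact sq_pos_of_ne (show f s - g s ≠ 0 from (show 0 < f s - g s by linarith).ne')
        have hnn4 : 0 ≤ ∫ s in p..mid, (f s - g s)^2 :=
          intervalIntegral.integral_nonneg hmid1.le (fun s _ => sq_nonneg _)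
        linarith [hsplit4]
    have hfinal : ε^2 + (∫ s in p..zg, (f s - g s)^2) ≤ ε^2 := by
      calc ε^2 + (∫ s in p..zg, (f s - g s)^2)
          ≤ (∫ s in q..p, (f s - g s)^2) + (∫ s in p..zg, (f s - g s)^2) := by linarith
        _ ≤ ∫ s in (0:ℝ)..1, (f s - g s)^2 := by rw [← hs3, ← hs2, ← hs1]; linarith
        _ ≤ ε^2 := hL2
    linarith

lemma phi_at_level {f : ℝ → ℝ} {z ε : ℝ} (hf : ConvexOn ℝ (Icc (0:ℝ) 1) f)
    (hz : UniqueMinOn f z) (hε : 0 < ε) :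
    ε^2 ≤ (∫ t in (0:ℝ)..1, (max ((rhoM ε f (f z) + f z) - f t) 0)^2) ∧
      f z < rhoM ε f (f z) + f z := by
  obtain ⟨C, hC0, hC⟩ := convex_exists_bound hf
  have hm_bdd := rhoM_set_bddAbove hf hz hε.le
  have hm0 : 0 ≤ rhoM ε f (f z) := le_csSup hm_bdd (rhoM_set_zero_mem hz hε.le)
  set m := rhoM ε f (f z) with hmdef
  set a := m + f z with hadef
  -- integrability of the truncation-difference integrands uniformly
  have hint : ∀ u : ℝ, IntervalIntegrable (fun t => (max (u - f t) 0)^2) volume 0 1 := by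
    intro u
    apply II_sq zero_le_one (D := |u| + C)
    · exact (continuousOn_const.sub (convex_continuousOn_Ioo hf)).sup continuousOn_const
    · intro t ht
      have h1 := hC t (Ioo_subset_Icc_self ht)
      rw [abs_of_nonneg (le_max_right _ _)]
      apply max_le _ (by positivity)
      have h2 := le_abs_self u
      have h3 := neg_abs_le (f t)
      linarith
  -- above the critical level the L2 distance exceeds ε
  have hclaimA : ∀ u : ℝ, m < u - f z →
      ε^2 < ∫ t in (0:ℝ)..1, (max (u - f t) 0)^2 := by
    intro u hu
    have hnotmem : ¬ (L2 f (trunc f u) ≤ ε) := by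
      intro hle
      have : u - f z ≤ m := le_csSup hm_bdd ⟨u, rfl, hle⟩
      linarith
    have heq : (fun t => (f t - trunc f u t)^2) = (fun t => (max (u - f t) 0)^2) := by
      funext t
      simp only [trunc]
      rcases le_total u (f t) with h | h
      · rw [max_eq_left h, max_eq_right (by linarith)]; ring
      · rw [max_eq_right h, max_eq_left (by linarith)]; ring
    by_contra hcon
    push_neg at hcon
    apply hnotmem
    unfold L2
    rw [heq]
    exact (Real.sqrt_le_left hε.le).2 hcon
  -- convergence of the integrals from above
  have htend : Filter.Tendsto (fun n : ℕ => ∫ t in (0:ℝ)..1, (max ((a + 1/(n+1)) - f t) 0)^2)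
      Filter.atTop (nhds (∫ t in (0:ℝ)..1, (max (a - f t) 0)^2)) := by
    have hconv : ∀ n : ℕ, (∫ t in (0:ℝ)..1, (max ((a + 1/(n+1)) - f t) 0)^2)
        = ∫ t in Ioc (0:ℝ) 1, (max ((a + 1/(n+1)) - f t) 0)^2 := fun n =>
      intervalIntegral.integral_of_le zero_le_one
    have hconv0 : (∫ t in (0:ℝ)..1, (max (a - f t) 0)^2)
        = ∫ t in Ioc (0:ℝ) 1, (max (a - f t) 0)^2 := intervalIntegral.integral_of_le zero_le_one
    simp only [hconv, hconv0]
    apply MeasureTheory.integral_tendsto_of_tendsto_of_antitone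
    · intro n
      have := hint (a + 1/(n+1))
      rwa [intervalIntegrable_iff_integrableOn_Ioc_of_le zero_le_one] at this
    · have := hint a
      rwa [intervalIntegrable_iff_integrableOn_Ioc_of_le zero_le_one] at this
    · apply Filter.Eventually.of_forall
      intro t n k hnk
      have h1 : (1:ℝ)/(k+1) ≤ 1/(n+1) := by
        apply one_div_le_one_div_of_le (by positivity)
        exact_mod_cast by omega
      apply pow_le_pow_left₀ (le_max_right _ _)
      exact max_le_max (by linarith) le_rfl
    · apply Filter.Eventually.of_forall
      intro t
      have h1 : Filter.Tendsto (fun n : ℕ => (a + 1/(n+1:ℝ)) - f t) Filter.atTop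
          (nhds (a - f t)) := by
        have h2 : Filter.Tendsto (fun n : ℕ => 1/(n+1:ℝ)) Filter.atTop (nhds 0) :=
          tendsto_one_div_add_atTop_nhds_zero_nat
        have h3 : Filter.Tendsto (fun n : ℕ => a + 1/(n+1:ℝ)) Filter.atTop (nhds (a + 0)) :=
          tendsto_const_nhds.add h2
        rw [add_zero] at h3
        exact h3.sub tendsto_const_nhds
      have h4 := (h1.max (tendsto_const_nhds (x := (0:ℝ)))).pow 2
      simpa using h4
  have hlim : ε^2 ≤ ∫ t in (0:ℝ)..1, (max (a - f t) 0)^2 := by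
    apply ge_of_tendsto htend
    apply Filter.Eventually.of_forall
    intro n
    have : m < (a + 1/(n+1)) - f z := by
      have : (0:ℝ) < 1/(n+1) := by positivity
      rw [hadef]; linarith
    exact (hclaimA _ this).le
  refine ⟨hlim, ?_⟩
  -- positivity of the depth
  rcases eq_or_lt_of_le hm0 with heq | hlt
  · exfalso
    have hzero : ∫ t in (0:ℝ)..1, (max (a - f t) 0)^2 = 0 := by
      apply integral_zero_on_Ioo zero_le_one
      intro t ht
      have : f z ≤ f t := min_le hz t (Ioo_subset_Icc_self ht)
      have ha_eq : a = f z := by rw [hadef, ← heq]; ring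
      rw [ha_eq, max_eq_right (by linarith)]
      norm_num
    rw [hzero] at hlim
    nlinarith
  · linarith

lemma integral_reflect (F : ℝ → ℝ) :
    ∫ t in (0:ℝ)..1, F (1 - t) = ∫ t in (0:ℝ)..1, F t := by
  have := intervalIntegral.integral_comp_sub_left (a := 0) (b := 1) F 1
  simpa using this

lemma convexOn_reflect {f : ℝ → ℝ} (hf : ConvexOn ℝ (Icc (0:ℝ) 1) f) :
    ConvexOn ℝ (Icc (0:ℝ) 1) (fun s => f (1 - s)) := by
  refine ⟨convex_Icc 0 1, ?_⟩
  intro x hx y hy c b hc hb hcb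
  have hx' : 1 - x ∈ Icc (0:ℝ) 1 := ⟨by linarith [hx.2], by linarith [hx.1]⟩
  have hy' : 1 - y ∈ Icc (0:ℝ) 1 := ⟨by linarith [hy.2], by linarith [hy.1]⟩
  have h := hf.2 hx' hy' hc hb hcb
  simp only [smul_eq_mul] at h ⊢
  have he : 1 - (c*x + b*y) = c*(1-x) + b*(1-y) := by
    have hb' : b = 1 - c := by linarith
    rw [hb']; ring
  rw [he]
  exact h

lemma uniqueMin_reflect {g : ℝ → ℝ} {zg : ℝ} (h : UniqueMinOn g zg) :
    UniqueMinOn (fun s => g (1 - s)) (1 - zg) := by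
  refine ⟨⟨by linarith [h.1.2], by linarith [h.1.1]⟩, ?_⟩
  intro t ht hne
  have h1t : 1 - t ∈ Icc (0:ℝ) 1 := ⟨by linarith [ht.2], by linarith [ht.1]⟩
  have hne' : 1 - t ≠ zg := fun hh => hne (by linarith [hh.symm.le, hh.le])
  have := h.2 (1 - t) h1t hne'
  simpa using this

lemma rhoZ_set_bddAbove (f : ℝ → ℝ) (z ε Mf : ℝ) (hz : UniqueMinOn f z) :
    BddAbove {v | ∃ t ∈ Icc (0:ℝ) 1, v = |t - z| ∧ f t ≤ rhoM ε f Mf + Mf} := by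
  refine ⟨1, fun v hv => ?_⟩
  obtain ⟨t, ht, rfl, _⟩ := hv
  have h1 := hz.1.1; have h2 := hz.1.2
  rw [abs_le]; constructor
  · linarith [ht.1]
  · linarith [ht.2]

lemma rhoZ_nonneg {f : ℝ → ℝ} {z ε : ℝ} (hf : ConvexOn ℝ (Icc (0:ℝ) 1) f)
    (hz : UniqueMinOn f z) (hε : 0 ≤ ε) : 0 ≤ rhoZ ε f z (f z) := by
  have hm0 : 0 ≤ rhoM ε f (f z) :=
    le_csSup (rhoM_set_bddAbove hf hz hε) (rhoM_set_zero_mem hz hε)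
  rw [rhoZ]
  apply le_csSup (rhoZ_set_bddAbove f z ε (f z) hz)
  exact ⟨z, hz.1, by simp, by linarith⟩

lemma partB {f : ℝ → ℝ} {z ε : ℝ} (hf : ConvexOn ℝ (Icc (0:ℝ) 1) f)
    (hz : UniqueMinOn f z) (hε : 0 < ε) :
    omegaZ ε f z ≤ 3 * rhoZ ε f z (f z) := by
  obtain ⟨hφ, hma⟩ := phi_at_level hf hz hε
  have hρ0 : 0 ≤ rhoZ ε f z (f z) := rhoZ_nonneg hf hz hε.le
  have hρbdd := rhoZ_set_bddAbove f z ε (f z) hz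
  have hρ : ∀ t ∈ Icc (0:ℝ) 1, f t ≤ rhoM ε f (f z) + f z → |t - z| ≤ rhoZ ε f z (f z) := by
    intro t ht hle
    rw [rhoZ]
    exact le_csSup hρbdd ⟨t, ht, rfl, hle⟩
  rw [omegaZ]
  apply Real.sSup_le _ (by linarith)
  rintro v ⟨g, zg, hg, hzg, hL2g, rfl⟩
  have hL2sq : ∫ t in (0:ℝ)..1, (f t - g t)^2 ≤ ε^2 := sq_of_L2_le hε.le hL2g
  have h1 : zg - z ≤ 3 * rhoZ ε f z (f z) :=
    keyK hf hz hg hzg hε hma hρ0 hρ hφ hL2sq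
  have h2 : z - zg ≤ 3 * rhoZ ε f z (f z) := by
    have hφ' : ε^2 ≤ ∫ t in (0:ℝ)..1,
        (max ((rhoM ε f (f z) + f z) - (fun s => f (1 - s)) t) 0)^2 := by
      have hr := integral_reflect (fun s => (max ((rhoM ε f (f z) + f z) - f s) 0)^2)
      exact hφ.trans_eq hr.symm
    have hL2' : ∫ t in (0:ℝ)..1,
        ((fun s => f (1 - s)) t - (fun s => g (1 - s)) t)^2 ≤ ε^2 := by
      have hr := integral_reflect (fun s => (f s - g s)^2)
      exact hr.trans_le hL2sq
    have hρ' : ∀ t ∈ Icc (0:ℝ) 1, (fun s => f (1 - s)) t ≤ rhoM ε f (f z) + f z →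
        |t - (1 - z)| ≤ rhoZ ε f z (f z) := by
      intro t ht hle
      have h1t : 1 - t ∈ Icc (0:ℝ) 1 := ⟨by linarith [ht.2], by linarith [ht.1]⟩
      have := hρ (1 - t) h1t hle
      rw [show t - (1 - z) = -((1 - t) - z) by ring, abs_neg]
      exact this
    have hma' : (fun s => f (1 - s)) (1 - z) < rhoM ε f (f z) + f z := by
      simpa using hma
    have hkey := keyK (convexOn_reflect hf) (uniqueMin_reflect hz)
      (convexOn_reflect hg) (uniqueMin_reflect hzg) hε hma' hρ0 hρ' hφ' hL2'
    linarith
  rw [abs_sub_le_iff]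
  exact ⟨h2, h1⟩

/-- Proposition 2.2 for the minimizer: ρ_z(ε;f) ≤ ω_z(ε;f) ≤ 3ρ_z(ε;f). -/
theorem stmt5 (f : ℝ → ℝ) (z ε : ℝ)
    (hf : ConvexOn ℝ (Icc (0:ℝ) 1) f) (hz : UniqueMinOn f z) (hε : 0 < ε) :
    rhoZ ε f z (f z) ≤ omegaZ ε f z ∧ omegaZ ε f z ≤ 3 * rhoZ ε f z (f z) :=
  ⟨partA hf hz hε, partB hf hz hε⟩
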